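/- arXiv:1110.5293 — 4 statements merged into one kernel-verified Lean document; each statement's English description precedes it below -/
import Mathlib

section
/- Let C be a small category, V a cocomplete symmetric monoidal closed category, F, G : C → V functors with each GC having a right dual (GC)^∧. Then the internal hom Hom(Nat^∨(F,G), I) is an end ∫_C Hom(FC, GC), where Nat^∨(F,G) := ∫^C FC ⊗ (GC)^∧. In particular, morphisms Nat^∨(F,G) → I in V correspond bijectively to natural transformations F ⇒ G. -/
open CategoryTheory MonoidalCategory MonoidalClosed Opposite

namespace Stmt14Aux

variable {C : Type*} [SmallCategory C] {V : Type*} [Category V]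
    [MonoidalCategory V] [SymmetricCategory V] [MonoidalClosed V]

theorem uncurry_comp_pre {A A' Y X : V} (g : A ⟶ A') (v : Y ⟶ (ihom A').obj X) :
    uncurry (v ≫ (MonoidalClosed.pre g).app X) = (g ▷ Y) ≫ uncurry v := by
  rw [uncurry_eq, uncurry_eq, MonoidalCategory.whiskerLeft_comp, Category.assoc,
    id_tensor_pre_app_comp_ev, whisker_exchange_assoc]

theorem curry_whiskerRight_comp {A A' Y X : V} (g : A ⟶ A') (x : A' ⊗ Y ⟶ X) :
    curry ((g ▷ Y) ≫ x) = curry x ≫ (MonoidalClosed.pre g).app X := by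
  apply uncurry_injective
  rw [uncurry_curry, uncurry_comp_pre, uncurry_curry]

/-- Currying as an equivalence. -/
def curryE (A Y X : V) : (A ⊗ Y ⟶ X) ≃ (Y ⟶ (ihom A).obj X) where
  toFun := curry
  invFun := uncurry
  left_inv := uncurry_curry
  right_inv := curry_uncurry

variable (G : C ⥤ V) (D : Cᵒᵖ ⥤ V) (p : ∀ c : C, ExactPairing (D.obj (op c)) (G.obj c))

/-- The duality hom-equivalence. -/
def trh (X : V) (c : C) : (X ⊗ D.obj (op c) ⟶ 𝟙_ V) ≃ (X ⟶ 𝟙_ V ⊗ G.obj c) :=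
  @tensorRightHomEquiv V _ _ X (D.obj (op c)) (G.obj c) (𝟙_ V) (p c)

lemma trh_def (X : V) (c : C) :
    trh G D p X c = @tensorRightHomEquiv V _ _ X (D.obj (op c)) (G.obj c) (𝟙_ V) (p c) := rfl

lemma trh_whiskerRight_comp {X X' : V} (g : X ⟶ X') {c : C}
    (u : X' ⊗ D.obj (op c) ⟶ 𝟙_ V) :
    trh G D p X c ((g ▷ D.obj (op c)) ≫ u) = g ≫ trh G D p X' c u := by
  letI := p c
  apply (trh G D p X c).symm.injective
  rw [Equiv.symm_apply_apply, trh_def, trh_def, tensorRightHomEquiv_symm_naturality,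
    Equiv.symm_apply_apply]

lemma trh_dinatural {X : V} {c c' : C} (f : c ⟶ c')
    (hη : (p c').coevaluation' ≫ (D.map f.op ▷ G.obj c') =
      (p c).coevaluation' ≫ (D.obj (op c) ◁ G.map f))
    (u : X ⊗ D.obj (op c) ⟶ 𝟙_ V) :
    trh G D p X c' ((X ◁ D.map f.op) ≫ u) = trh G D p X c u ≫ (𝟙_ V ◁ G.map f) := by
  letI := p c; letI := p c'
  rw [trh_def, trh_def]
  dsimp only [tensorRightHomEquiv, Equiv.coe_fn_mk]
  have hcoev : ∀ (c : C), (η_ (D.obj (op c)) (G.obj c)) = (p c).coevaluation' := fun _ => rfl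
  simp only [comp_whiskerRight, Category.assoc]
  rw [← associator_inv_naturality_middle_assoc, ← MonoidalCategory.whiskerLeft_comp_assoc,
    hcoev, hcoev, hη, MonoidalCategory.whiskerLeft_comp_assoc,
    associator_inv_naturality_right_assoc, whisker_exchange]

/-- The duality hom-equivalence, with the unit object stripped. -/
def Rx (X : V) (c : C) : (X ⊗ D.obj (op c) ⟶ 𝟙_ V) ≃ (X ⟶ G.obj c) :=
  (trh G D p X c).trans ((Iso.refl X).homCongr (λ_ (G.obj c)))

lemma Rx_apply (X : V) (c : C) (u : X ⊗ D.obj (op c) ⟶ 𝟙_ V) :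
    Rx G D p X c u = trh G D p X c u ≫ (λ_ (G.obj c)).hom := by
  simp [Rx, Iso.homCongr]

lemma Rx_whiskerRight_comp {X X' : V} (g : X ⟶ X') {c : C}
    (u : X' ⊗ D.obj (op c) ⟶ 𝟙_ V) :
    Rx G D p X c ((g ▷ D.obj (op c)) ≫ u) = g ≫ Rx G D p X' c u := by
  rw [Rx_apply, Rx_apply, trh_whiskerRight_comp, Category.assoc]

lemma Rx_dinatural {X : V} {c c' : C} (f : c ⟶ c')
    (hη : (p c').coevaluation' ≫ (D.map f.op ▷ G.obj c') =
      (p c).coevaluation' ≫ (D.obj (op c) ◁ G.map f))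
    (u : X ⊗ D.obj (op c) ⟶ 𝟙_ V) :
    Rx G D p X c' ((X ◁ D.map f.op) ≫ u) = Rx G D p X c u ≫ G.map f := by
  rw [Rx_apply, Rx_apply, trh_dinatural G D p f hη, Category.assoc,
    MonoidalCategory.leftUnitor_naturality, Category.assoc]

/-- The key equivalence `(A ⊗ D c ⟶ [Z, I]) ≃ (Z ⟶ [A, G c])`. -/
def Xi (Z A : V) (c : C) :
    (A ⊗ D.obj (op c) ⟶ (ihom Z).obj (𝟙_ V)) ≃ (Z ⟶ (ihom A).obj (G.obj c)) :=
  ((curryE Z (A ⊗ D.obj (op c)) (𝟙_ V)).symm.trans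
    (((α_ Z A (D.obj (op c))).symm.homCongr (Iso.refl (𝟙_ V))).trans
      ((Rx G D p (Z ⊗ A) c).trans
        (((β_ Z A).homCongr (Iso.refl (G.obj c))).trans
          (curryE A Z (G.obj c))))))

lemma Xi_apply (Z A : V) (c : C) (v : A ⊗ D.obj (op c) ⟶ (ihom Z).obj (𝟙_ V)) :
    Xi G D p Z A c v =
      curry ((β_ Z A).inv ≫
        Rx G D p (Z ⊗ A) c ((α_ Z A (D.obj (op c))).hom ≫ uncurry v)) := by
  simp [Xi, curryE, Iso.homCongr]

lemma Xi_natural_left {Z Z' A : V} {c : C} (f : Z ⟶ Z')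
    (v : A ⊗ D.obj (op c) ⟶ (ihom Z').obj (𝟙_ V)) :
    Xi G D p Z A c (v ≫ (MonoidalClosed.pre f).app (𝟙_ V)) = f ≫ Xi G D p Z' A c v := by
  rw [Xi_apply, Xi_apply, uncurry_comp_pre, ← associator_naturality_left_assoc,
    Rx_whiskerRight_comp]
  rw [show (β_ Z A).inv ≫ (f ▷ A) ≫ Rx G D p (Z' ⊗ A) c ((α_ Z' A _).hom ≫ uncurry v)
      = A ◁ f ≫ (β_ Z' A).inv ≫ Rx G D p (Z' ⊗ A) c ((α_ Z' A _).hom ≫ uncurry v) by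
    rw [← BraidedCategory.braiding_inv_naturality_right_assoc]]
  rw [curry_natural_left]

lemma Xi_natural_A {Z A A' : V} {c : C} (g : A ⟶ A')
    (v : A' ⊗ D.obj (op c) ⟶ (ihom Z).obj (𝟙_ V)) :
    Xi G D p Z A c ((g ▷ D.obj (op c)) ≫ v) =
      Xi G D p Z A' c v ≫ (MonoidalClosed.pre g).app (G.obj c) := by
  rw [Xi_apply, Xi_apply, uncurry_natural_left, ← associator_naturality_middle_assoc,
    Rx_whiskerRight_comp]
  rw [show (β_ Z A).inv ≫ (Z ◁ g) ≫ Rx G D p (Z ⊗ A') c ((α_ Z A' _).hom ≫ uncurry v)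
      = g ▷ Z ≫ (β_ Z A').inv ≫ Rx G D p (Z ⊗ A') c ((α_ Z A' _).hom ≫ uncurry v) by
    rw [← BraidedCategory.braiding_inv_naturality_left_assoc]]
  rw [curry_whiskerRight_comp]

lemma Xi_dinatural {Z A : V} {c c' : C} (f : c ⟶ c')
    (hη : (p c').coevaluation' ≫ (D.map f.op ▷ G.obj c') =
      (p c).coevaluation' ≫ (D.obj (op c) ◁ G.map f))
    (v : A ⊗ D.obj (op c) ⟶ (ihom Z).obj (𝟙_ V)) :
    Xi G D p Z A c' ((A ◁ D.map f.op) ≫ v) =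
      Xi G D p Z A c v ≫ (ihom A).map (G.map f) := by
  rw [Xi_apply, Xi_apply, uncurry_natural_left, ← associator_naturality_right_assoc,
    Rx_dinatural G D p f hη, ← Category.assoc, curry_natural_right]

variable (T : V)

/-- The symmetry equivalence `(Z ⟶ [T, I]) ≃ (T ⟶ [Z, I])`. -/
def toTE (Z : V) : (Z ⟶ (ihom T).obj (𝟙_ V)) ≃ (T ⟶ (ihom Z).obj (𝟙_ V)) where
  toFun h := curry ((β_ Z T).hom ≫ uncurry h)
  invFun k := curry ((β_ T Z).hom ≫ uncurry k)
  left_inv h := by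
    dsimp only
    rw [uncurry_curry, ← Category.assoc, SymmetricCategory.symmetry, Category.id_comp,
      curry_uncurry]
  right_inv k := by
    dsimp only
    rw [uncurry_curry, ← Category.assoc, SymmetricCategory.symmetry, Category.id_comp,
      curry_uncurry]

lemma toTE_natural {Z Z' : V} (f : Z ⟶ Z') (h : Z' ⟶ (ihom T).obj (𝟙_ V)) :
    toTE T Z (f ≫ h) = toTE T Z' h ≫ (MonoidalClosed.pre f).app (𝟙_ V) := by
  simp only [toTE, Equiv.coe_fn_mk]
  rw [uncurry_natural_left, ← BraidedCategory.braiding_naturality_left_assoc,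
    curry_whiskerRight_comp]


/-- The natural transformation induced by a morphism `T ⟶ 𝟙_ V`. -/
def mkNat (F : C ⥤ V)
    (hη : ∀ {c c' : C} (f : c ⟶ c'),
      (p c').coevaluation' ≫ (D.map f.op ▷ G.obj c') =
        (p c).coevaluation' ≫ (D.obj (op c) ◁ G.map f))
    (ι : ∀ c : C, F.obj c ⊗ D.obj (op c) ⟶ T)
    (hdin : ∀ {c c' : C} (f : c ⟶ c'),
      (F.map f ▷ D.obj (op c')) ≫ ι c' = (F.obj c ◁ D.map f.op) ≫ ι c)
    (h : T ⟶ 𝟙_ V) : F ⟶ G where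
  app c := Rx G D p (F.obj c) c (ι c ≫ h)
  naturality c c' f := by
    try dsimp only
    rw [← Rx_whiskerRight_comp, ← Category.assoc, hdin f, Category.assoc,
      Rx_dinatural G D p f (hη f)]

end Stmt14Aux

open Stmt14Aux

/-- Let `C` be small, `V` a cocomplete symmetric monoidal closed category, `F G : C ⥤ V`
with each `G c` having a right dual `D c` (depending functorially on `c`, with dinatural
evaluations and coevaluations).  If `(T, ι)` is the coend `Nat^∨(F,G) = ∫^C F c ⊗ (G c)^∧`,
then the internal hom `Hom(T, I)` is an end `∫_C Hom(F c, G c)`; in particular morphisms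
`T ⟶ I` in `V` correspond bijectively to natural transformations `F ⟶ G`. -/
theorem stmt14 {C : Type*} [SmallCategory C] {V : Type*} [Category V]
    [MonoidalCategory V] [SymmetricCategory V] [MonoidalClosed V] [Limits.HasColimits V]
    (F G : C ⥤ V) (D : Cᵒᵖ ⥤ V)
    (p : ∀ c : C, ExactPairing (D.obj (op c)) (G.obj c))
    (hε : ∀ {c c' : C} (f : c ⟶ c'),
      (G.map f ▷ D.obj (op c')) ≫ (p c').evaluation' =
        (G.obj c ◁ D.map f.op) ≫ (p c).evaluation')
    (hη : ∀ {c c' : C} (f : c ⟶ c'),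
      (p c').coevaluation' ≫ (D.map f.op ▷ G.obj c') =
        (p c).coevaluation' ≫ (D.obj (op c) ◁ G.map f))
    (T : V) (ι : ∀ c : C, F.obj c ⊗ D.obj (op c) ⟶ T)
    (hdin : ∀ {c c' : C} (f : c ⟶ c'),
      (F.map f ▷ D.obj (op c')) ≫ ι c' = (F.obj c ◁ D.map f.op) ≫ ι c)
    (huniv : ∀ (Z : V) (w : ∀ c : C, F.obj c ⊗ D.obj (op c) ⟶ Z),
      (∀ {c c' : C} (f : c ⟶ c'),
        (F.map f ▷ D.obj (op c')) ≫ w c' = (F.obj c ◁ D.map f.op) ≫ w c) →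
      ∃! h : T ⟶ Z, ∀ c : C, ι c ≫ h = w c) :
    (∃ π : ∀ c : C, (ihom T).obj (𝟙_ V) ⟶ (ihom (F.obj c)).obj (G.obj c),
      (∀ {c c' : C} (f : c ⟶ c'),
        π c ≫ (ihom (F.obj c)).map (G.map f) =
          π c' ≫ (MonoidalClosed.pre (F.map f)).app (G.obj c')) ∧
      (∀ (Z : V) (w : ∀ c : C, Z ⟶ (ihom (F.obj c)).obj (G.obj c)),
        (∀ {c c' : C} (f : c ⟶ c'),
          w c ≫ (ihom (F.obj c)).map (G.map f) =
            w c' ≫ (MonoidalClosed.pre (F.map f)).app (G.obj c')) →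
        ∃! h : Z ⟶ (ihom T).obj (𝟙_ V), ∀ c : C, h ≫ π c = w c)) ∧
    Nonempty ((T ⟶ 𝟙_ V) ≃ (F ⟶ G)) := by
  classical
  have hπ : ∀ {Z : V} (h : Z ⟶ (ihom T).obj (𝟙_ V)) (c : C),
      h ≫ Xi G D p ((ihom T).obj (𝟙_ V)) (F.obj c) c
          (ι c ≫ toTE T ((ihom T).obj (𝟙_ V)) (𝟙 _))
        = Xi G D p Z (F.obj c) c (ι c ≫ toTE T Z h) := by
    intro Z h c
    have h1 : toTE T Z h
        = toTE T ((ihom T).obj (𝟙_ V)) (𝟙 _) ≫ (MonoidalClosed.pre h).app (𝟙_ V) := by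
      simpa using toTE_natural T h (𝟙 _)
    rw [h1, ← Category.assoc, Xi_natural_left]
  constructor
  · refine ⟨fun c => Xi G D p ((ihom T).obj (𝟙_ V)) (F.obj c) c
        (ι c ≫ toTE T ((ihom T).obj (𝟙_ V)) (𝟙 _)), ?_, ?_⟩
    · intro c c' f
      have e1 : (F.obj c ◁ D.map f.op) ≫ (ι c ≫ toTE T ((ihom T).obj (𝟙_ V)) (𝟙 _))
          = (F.map f ▷ D.obj (op c')) ≫ (ι c' ≫ toTE T ((ihom T).obj (𝟙_ V)) (𝟙 _)) := by
        rw [← Category.assoc, ← hdin f, Category.assoc]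
      rw [← Xi_dinatural G D p f (hη f), e1, Xi_natural_A]
    · intro Z w hw
      have hvdin : ∀ {c c' : C} (f : c ⟶ c'),
          (F.map f ▷ D.obj (op c')) ≫ (Xi G D p Z (F.obj c') c').symm (w c')
            = (F.obj c ◁ D.map f.op) ≫ (Xi G D p Z (F.obj c) c).symm (w c) := by
        intro c c' f
        apply (Xi G D p Z (F.obj c) c').injective
        rw [Xi_natural_A, Xi_dinatural G D p f (hη f), Equiv.apply_symm_apply,
          Equiv.apply_symm_apply, hw f]
      obtain ⟨k, hk, hkuniq⟩ :=
        huniv ((ihom Z).obj (𝟙_ V)) (fun c => (Xi G D p Z (F.obj c) c).symm (w c)) hvdin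
      refine ⟨(toTE T Z).symm k, ?_, ?_⟩
      · intro c
        rw [hπ, Equiv.apply_symm_apply, hk c, Equiv.apply_symm_apply]
      · intro h' hh'
        have hk' : toTE T Z h' = k := by
          apply hkuniq
          intro c
          apply (Xi G D p Z (F.obj c) c).injective
          rw [← hπ h' c, hh' c, Equiv.apply_symm_apply]
        rw [← hk', Equiv.symm_apply_apply]
  · have hw : ∀ (α : F ⟶ G) {c c' : C} (f : c ⟶ c'),
        (F.map f ▷ D.obj (op c')) ≫ (Rx G D p (F.obj c') c').symm (α.app c') =
          (F.obj c ◁ D.map f.op) ≫ (Rx G D p (F.obj c) c).symm (α.app c) := by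
      intro α c c' f
      apply (Rx G D p (F.obj c) c').injective
      rw [Rx_whiskerRight_comp, Rx_dinatural G D p f (hη f), Equiv.apply_symm_apply,
        Equiv.apply_symm_apply, α.naturality]
    have hwq := fun (α : F ⟶ G) =>
      huniv (𝟙_ V) (fun c => (Rx G D p (F.obj c) c).symm (α.app c)) (hw α)
    choose ti hti htiu using hwq
    refine ⟨⟨mkNat G D p T F hη ι hdin, ti, ?_, ?_⟩⟩
    · intro h
      refine (htiu (mkNat G D p T F hη ι hdin h) h fun c => ?_).symm
      exact (Equiv.symm_apply_apply _ _).symm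
    · intro α
      ext c
      show Rx G D p (F.obj c) c (ι c ≫ ti α) = α.app c
      rw [hti α c, Equiv.apply_symm_apply]
end

section
/- Let C be a small category, V a cocomplete symmetric monoidal closed category, and G : C → V a functor with each GC having a right dual. Then there is an adjunction Nat^∨(−, G) ⊣ (−) ⊗ G between V^C and V: morphisms Nat^∨(F, G) → V in V correspond naturally and bijectively to natural transformations F ⇒ V ⊗ G (where V ⊗ G denotes the functor C ↦ V ⊗ GC). -/
open CategoryTheory MonoidalCategory Opposite

/-- For `G : C ⥤ V` and `V₀ : V`, the functor `c ↦ V₀ ⊗ G c`. -/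
def tensorWith {C : Type*} [SmallCategory C] {V : Type*} [Category V]
    [MonoidalCategory V] (G : C ⥤ V) (V₀ : V) : C ⥤ V where
  obj c := V₀ ⊗ G.obj c
  map f := V₀ ◁ G.map f
  map_id := by intro c; simp
  map_comp := by intro a b c f g; simp

/-- Key computation: compatibility of `tensorRightHomEquiv.symm` with maps between
two exact pairings satisfying the evaluation compatibility. -/
lemma stmt15_key {V : Type*} [Category V] [MonoidalCategory V]
    {D₁ G₁ D₂ G₂ V₀ X : V}
    (p₁ : ExactPairing D₁ G₁) (p₂ : ExactPairing D₂ G₂)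
    (gf : G₁ ⟶ G₂) (df : D₂ ⟶ D₁)
    (hε : (gf ▷ D₂) ≫ p₂.evaluation' = (G₁ ◁ df) ≫ p₁.evaluation')
    (g : X ⟶ V₀ ⊗ G₁) :
    (@tensorRightHomEquiv V _ _ X D₂ G₂ V₀ p₂).symm (g ≫ (V₀ ◁ gf)) =
      (X ◁ df) ≫ (@tensorRightHomEquiv V _ _ X D₁ G₁ V₀ p₁).symm g := by
  dsimp [tensorRightHomEquiv]
  calc (g ≫ V₀ ◁ gf) ▷ D₂ ≫ (α_ _ _ _).hom ≫ V₀ ◁ p₂.evaluation' ≫ (ρ_ V₀).hom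
      = g ▷ D₂ ≫ ((V₀ ◁ gf) ▷ D₂ ≫ (α_ _ _ _).hom) ≫ V₀ ◁ p₂.evaluation' ≫ (ρ_ V₀).hom := by
        simp
    _ = g ▷ D₂ ≫ (α_ _ _ _).hom ≫ V₀ ◁ ((gf ▷ D₂) ≫ p₂.evaluation') ≫ (ρ_ V₀).hom := by
        rw [associator_naturality_middle]; simp
    _ = g ▷ D₂ ≫ (α_ _ _ _).hom ≫ V₀ ◁ ((G₁ ◁ df) ≫ p₁.evaluation') ≫ (ρ_ V₀).hom := by
        rw [hε]
    _ = (X ◁ df) ≫ g ▷ D₁ ≫ (α_ _ _ _).hom ≫ V₀ ◁ p₁.evaluation' ≫ (ρ_ V₀).hom := by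
        rw [MonoidalCategory.whiskerLeft_comp]
        slice_lhs 2 3 => rw [← associator_naturality_right]
        slice_lhs 1 2 => rw [← whisker_exchange]
        simp

/-- Let `C` be small, `V` a cocomplete symmetric monoidal closed category, and `G : C ⥤ V`
with each `G c` having a right dual.  If `(T, ι)` is the coend
`Nat^∨(F, G) = ∫^C F c ⊗ (G c)^∧`, then there is an adjunction `Nat^∨(−, G) ⊣ (−) ⊗ G`:
morphisms `T ⟶ V₀` in `V` correspond naturally and bijectively to natural transformations
`F ⟶ V₀ ⊗ G`, the bijection being given by the coevaluation of the dualities through `ι`. -/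
theorem stmt15 {C : Type*} [SmallCategory C] {V : Type*} [Category V]
    [MonoidalCategory V] [SymmetricCategory V] [MonoidalClosed V] [Limits.HasColimits V]
    (F G : C ⥤ V) (D : Cᵒᵖ ⥤ V)
    (p : ∀ c : C, ExactPairing (D.obj (op c)) (G.obj c))
    (hε : ∀ {c c' : C} (f : c ⟶ c'),
      (G.map f ▷ D.obj (op c')) ≫ (p c').evaluation' =
        (G.obj c ◁ D.map f.op) ≫ (p c).evaluation')
    (hη : ∀ {c c' : C} (f : c ⟶ c'),
      (p c').coevaluation' ≫ (D.map f.op ▷ G.obj c') =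
        (p c).coevaluation' ≫ (D.obj (op c) ◁ G.map f))
    (T : V) (ι : ∀ c : C, F.obj c ⊗ D.obj (op c) ⟶ T)
    (hdin : ∀ {c c' : C} (f : c ⟶ c'),
      (F.map f ▷ D.obj (op c')) ≫ ι c' = (F.obj c ◁ D.map f.op) ≫ ι c)
    (huniv : ∀ (Z : V) (w : ∀ c : C, F.obj c ⊗ D.obj (op c) ⟶ Z),
      (∀ {c c' : C} (f : c ⟶ c'),
        (F.map f ▷ D.obj (op c')) ≫ w c' = (F.obj c ◁ D.map f.op) ≫ w c) →
      ∃! h : T ⟶ Z, ∀ c : C, ι c ≫ h = w c) :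
    ∀ V₀ : V, ∃ e : (T ⟶ V₀) ≃ (F ⟶ tensorWith G V₀),
      ∀ (f : T ⟶ V₀) (c : C),
        (e f).app c =
          (ρ_ (F.obj c)).inv ≫ (F.obj c ◁ (p c).coevaluation') ≫
            (α_ (F.obj c) (D.obj (op c)) (G.obj c)).inv ≫ ((ι c ≫ f) ▷ G.obj c) := by
  intro V₀
  -- the basic hom equivalence at each object
  let E : ∀ c : C, (F.obj c ⊗ D.obj (op c) ⟶ V₀) ≃ (F.obj c ⟶ V₀ ⊗ G.obj c) :=
    fun c => @tensorRightHomEquiv V _ _ (F.obj c) (D.obj (op c)) (G.obj c) V₀ (p c)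
  -- forward map: a natural transformation
  have natfwd : ∀ (h : T ⟶ V₀) {c c' : C} (f : c ⟶ c'),
      F.map f ≫ E c' (ι c' ≫ h) = E c (ι c ≫ h) ≫ (V₀ ◁ G.map f) := by
    intro h c c' f
    letI E' : (F.obj c ⊗ D.obj (op c') ⟶ V₀) ≃ (F.obj c ⟶ V₀ ⊗ G.obj c') :=
      @tensorRightHomEquiv V _ _ (F.obj c) (D.obj (op c')) (G.obj c') V₀ (p c')
    refine E'.symm.injective ?_
    -- naturality of the equiv on the source side
    have h1 : E'.symm (F.map f ≫ E c' (ι c' ≫ h)) =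
        (F.map f ▷ D.obj (op c')) ≫ (ι c' ≫ h) := by
      rw [show E'.symm (F.map f ≫ E c' (ι c' ≫ h)) =
            F.map f ▷ D.obj (op c') ≫ (E c').symm (E c' (ι c' ≫ h)) from
          tensorRightHomEquiv_symm_naturality _ _, Equiv.symm_apply_apply]
    have h2 : E'.symm (E c (ι c ≫ h) ≫ (V₀ ◁ G.map f)) =
        (F.obj c ◁ D.map f.op) ≫ (ι c ≫ h) := by
      rw [show E'.symm (E c (ι c ≫ h) ≫ (V₀ ◁ G.map f)) =
            (F.obj c ◁ D.map f.op) ≫ (E c).symm (E c (ι c ≫ h)) from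
          stmt15_key (p c) (p c') (G.map f) (D.map f.op) (hε f) _, Equiv.symm_apply_apply]
    rw [h1, h2, ← Category.assoc, ← Category.assoc, hdin f]
  let toNat : (T ⟶ V₀) → (F ⟶ tensorWith G V₀) := fun h =>
    { app := fun c => E c (ι c ≫ h)
      naturality := fun c c' f => natfwd h f }
  -- inverse map
  have dinat : ∀ (θ : F ⟶ tensorWith G V₀) {c c' : C} (f : c ⟶ c'),
      (F.map f ▷ D.obj (op c')) ≫ (E c').symm (θ.app c') =
        (F.obj c ◁ D.map f.op) ≫ (E c).symm (θ.app c) := by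
    intro θ c c' f
    rw [← (@tensorRightHomEquiv_symm_naturality V _ _ (F.obj c) (F.obj c') (D.obj (op c'))
      (G.obj c') V₀ (p c') (F.map f) (θ.app c') :)]
    erw [θ.naturality f]
    exact stmt15_key (p c) (p c') (G.map f) (D.map f.op) (hε f) (θ.app c)
  have exu : ∀ θ : F ⟶ tensorWith G V₀,
      ∃! h : T ⟶ V₀, ∀ c : C, ι c ≫ h = (E c).symm (θ.app c) :=
    fun θ => huniv V₀ (fun c => (E c).symm (θ.app c)) (fun {c c'} f => dinat θ f)
  refine ⟨{ toFun := toNat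
            invFun := fun θ => (exu θ).choose
            left_inv := ?_
            right_inv := ?_ }, ?_⟩
  · intro h
    have hh : ∀ c, ι c ≫ h = (E c).symm ((toNat h).app c) :=
      fun c => (Equiv.symm_apply_apply (E c) (ι c ≫ h)).symm
    exact (exu (toNat h)).unique (exu (toNat h)).choose_spec.1 hh
  · intro θ
    ext c
    have := (exu θ).choose_spec.1 c
    show E c (ι c ≫ (exu θ).choose) = θ.app c
    rw [this]
    exact (E c).apply_symm_apply (θ.app c)
  · intro f c
    show E c (ι c ≫ f) = _
    rfl
end

section
/- Let V = Vec_K, C a small K-linear category and F : C → Vec_K a K-linear functor with finite-dimensional values (or more generally the stated coend setting). For each object C of C, the coevaluation η_C : FC → End^∨(F) ⊗ FC, given by η_C(v) = Σ_i [v ⊗ e_i^∨] ⊗ e_i for a basis {e_i} of FC, makes FC a left End^∨(F)-comodule, and for every morphism f : C → C' in C the map F(f) : FC → FC' is a morphism of End^∨(F)-comodules. -/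
open CategoryTheory MonoidalCategory Opposite

noncomputable def bmap {K : Type*} [CommRing K] (X Y T' : ModuleCat K) (i : X ⊗ Y ⟶ T') :
    X ⊗ ((Y ⊗ X) ⊗ (Y ⊗ X)) ⟶ T' ⊗ (T' ⊗ X) :=
  (X ◁ (β_ (Y ⊗ X) (Y ⊗ X)).hom) ≫ (α_ X (Y ⊗ X) (Y ⊗ X)).inv ≫
    ((α_ X Y X).inv ▷ (Y ⊗ X)) ≫ ((i ▷ X) ▷ (Y ⊗ X)) ≫ (α_ T' X (Y ⊗ X)).hom ≫
      (T' ◁ (α_ X Y X).inv) ≫ (T' ◁ (i ▷ X))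

lemma bmap_apply {K : Type*} [CommRing K] (X Y T' : ModuleCat K) (i : X ⊗ Y ⟶ T')
    (v : X) (y : Y) (x : X) (y' : Y) (x' : X) :
    bmap X Y T' i (v ⊗ₜ[K] ((y ⊗ₜ[K] x) ⊗ₜ[K] (y' ⊗ₜ[K] x'))) =
      i (v ⊗ₜ[K] y') ⊗ₜ[K] (i (x' ⊗ₜ[K] y) ⊗ₜ[K] x) := by
  simp only [bmap, ModuleCat.hom_comp, LinearMap.coe_comp, Function.comp_apply,
    ModuleCat.MonoidalCategory.whiskerLeft_apply,
    ModuleCat.MonoidalCategory.braiding_hom_apply]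
  rfl

lemma lemA {K : Type*} [CommRing K] (X Y T' : ModuleCat K)
    (g h : 𝟙_ (ModuleCat K) ⟶ Y ⊗ X) (i : X ⊗ Y ⟶ T') (v : X) :
    (α_ T' T' X).hom
      (((((X ◁ (λ_ Y).inv) ≫ (X ◁ (h ▷ Y)) ≫ (X ◁ (α_ Y X Y).hom) ≫
          (α_ X Y (X ⊗ Y)).inv) ≫ (i ⊗ₘ i)) ▷ X)
        ((α_ X Y X).inv ((X ◁ g) ((ρ_ X).inv v)))) =
      bmap X Y T' i (v ⊗ₜ[K] (g (1 : K) ⊗ₜ[K] h (1 : K))) := by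
  simp only [ModuleCat.MonoidalCategory.rightUnitor_inv_apply,
    ModuleCat.MonoidalCategory.whiskerLeft_apply]
  generalize g (1 : K) = t
  induction t using TensorProduct.induction_on with
  | zero => simp only [TensorProduct.tmul_zero, TensorProduct.zero_tmul, map_zero]
  | add a b iha ihb =>
      simp only [TensorProduct.tmul_add, TensorProduct.add_tmul, map_add, iha, ihb]
  | tmul y x =>
      simp only [ModuleCat.MonoidalCategory.associator_inv_apply,
        MonoidalCategory.comp_whiskerRight, ModuleCat.hom_comp, LinearMap.coe_comp, Function.comp_apply]
      rw [ModuleCat.MonoidalCategory.whiskerRight_apply (X ◁ (λ_ Y).inv),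
        ModuleCat.MonoidalCategory.whiskerLeft_apply X (λ_ Y).inv,
        ModuleCat.MonoidalCategory.leftUnitor_inv_apply,
        ModuleCat.MonoidalCategory.whiskerRight_apply (X ◁ (h ▷ Y)),
        ModuleCat.MonoidalCategory.whiskerLeft_apply X (h ▷ Y),
        ModuleCat.MonoidalCategory.whiskerRight_apply h Y]
      generalize h (1 : K) = s
      induction s using TensorProduct.induction_on with
      | zero => simp only [TensorProduct.tmul_zero, TensorProduct.zero_tmul, map_zero]
      | add a b iha ihb =>
          simp only [TensorProduct.tmul_add, TensorProduct.add_tmul, map_add, iha, ihb]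
      | tmul y' x' =>
          rw [ModuleCat.MonoidalCategory.whiskerRight_apply (X ◁ (α_ Y X Y).hom),
            ModuleCat.MonoidalCategory.whiskerLeft_apply X (α_ Y X Y).hom,
            ModuleCat.MonoidalCategory.associator_hom_apply,
            ModuleCat.MonoidalCategory.whiskerRight_apply (α_ X Y (X ⊗ Y)).inv,
            ModuleCat.MonoidalCategory.associator_inv_apply,
            ModuleCat.MonoidalCategory.whiskerRight_apply (i ⊗ₘ i),
            ModuleCat.MonoidalCategory.tensorHom_tmul,
            ModuleCat.MonoidalCategory.associator_hom_apply, bmap_apply]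

lemma lemB {K : Type*} [CommRing K] (X Y T' : ModuleCat K)
    (g h : 𝟙_ (ModuleCat K) ⟶ Y ⊗ X) (i : X ⊗ Y ⟶ T') (v : X) :
    (T' ◁ ((ρ_ X).inv ≫ (X ◁ g) ≫ (α_ X Y X).inv ≫ (i ▷ X)))
      ((i ▷ X) ((α_ X Y X).inv ((X ◁ h) ((ρ_ X).inv v)))) =
      bmap X Y T' i (v ⊗ₜ[K] (g (1 : K) ⊗ₜ[K] h (1 : K))) := by
  simp only [ModuleCat.MonoidalCategory.rightUnitor_inv_apply,
    ModuleCat.MonoidalCategory.whiskerLeft_apply]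
  generalize h (1 : K) = s
  induction s using TensorProduct.induction_on with
  | zero => simp only [TensorProduct.tmul_zero, TensorProduct.zero_tmul, map_zero]
  | add a b iha ihb =>
      simp only [TensorProduct.tmul_add, TensorProduct.add_tmul, map_add, iha, ihb]
  | tmul y' x' =>
      rw [ModuleCat.MonoidalCategory.associator_inv_apply,
        ModuleCat.MonoidalCategory.whiskerRight_apply i X,
        ModuleCat.MonoidalCategory.whiskerLeft_apply]
      simp only [ModuleCat.hom_comp, LinearMap.coe_comp, Function.comp_apply,
        ModuleCat.MonoidalCategory.rightUnitor_inv_apply]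
      rw [ModuleCat.MonoidalCategory.whiskerLeft_apply X g]
      generalize g (1 : K) = t
      induction t using TensorProduct.induction_on with
      | zero => simp only [TensorProduct.tmul_zero, TensorProduct.zero_tmul, map_zero]
      | add a b iha ihb =>
          simp only [TensorProduct.tmul_add, TensorProduct.add_tmul, map_add, iha, ihb]
      | tmul y x =>
          rw [ModuleCat.MonoidalCategory.associator_inv_apply,
            ModuleCat.MonoidalCategory.whiskerRight_apply i X, bmap_apply]


/-- Let `V = Vec_K` (`ModuleCat K` for a field `K`), `C` a small `K`-linear category and
`F : C ⥤ Vec_K` a `K`-linear functor with values having (right) duals, in the stated coend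
setting: `(T, ι)` is the coend `End^∨(F)` with its coalgebra structure `(Δ, ε)`.
Then for every object `c`, the coevaluation `ρc : F c ⟶ T ⊗ F c` (given by inserting the
dual-pairing coevaluation and projecting into the coend) makes `F c` a left
`End^∨(F)`-comodule, and for every `f : c ⟶ c'` the map `F f` is a morphism of
`End^∨(F)`-comodules. -/
theorem stmt17 {K : Type*} [Field K]
    {C : Type*} [SmallCategory C] [Preadditive C] [CategoryTheory.Linear K C]
    (F : C ⥤ ModuleCat K) [F.Additive] [F.Linear K]
    (D : Cᵒᵖ ⥤ ModuleCat K)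
    (p : ∀ c : C, ExactPairing (D.obj (op c)) (F.obj c))
    (hε : ∀ {c c' : C} (f : c ⟶ c'),
      (F.map f ▷ D.obj (op c')) ≫ (p c').evaluation' =
        (F.obj c ◁ D.map f.op) ≫ (p c).evaluation')
    (hη : ∀ {c c' : C} (f : c ⟶ c'),
      (p c').coevaluation' ≫ (D.map f.op ▷ F.obj c') =
        (p c).coevaluation' ≫ (D.obj (op c) ◁ F.map f))
    (T : ModuleCat K) (ι : ∀ c : C, F.obj c ⊗ D.obj (op c) ⟶ T)
    (hdin : ∀ {c c' : C} (f : c ⟶ c'),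
      (F.map f ▷ D.obj (op c')) ≫ ι c' = (F.obj c ◁ D.map f.op) ≫ ι c)
    (huniv : ∀ (Z : ModuleCat K) (w : ∀ c : C, F.obj c ⊗ D.obj (op c) ⟶ Z),
      (∀ {c c' : C} (f : c ⟶ c'),
        (F.map f ▷ D.obj (op c')) ≫ w c' = (F.obj c ◁ D.map f.op) ≫ w c) →
      ∃! h : T ⟶ Z, ∀ c : C, ι c ≫ h = w c)
    (Δ : T ⟶ T ⊗ T) (ε : T ⟶ 𝟙_ (ModuleCat K))
    (hΔ : ∀ c : C, ι c ≫ Δ =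
      ((F.obj c ◁ (λ_ (D.obj (op c))).inv) ≫
        (F.obj c ◁ ((p c).coevaluation' ▷ D.obj (op c))) ≫
          (F.obj c ◁ (α_ (D.obj (op c)) (F.obj c) (D.obj (op c))).hom) ≫
            (α_ (F.obj c) (D.obj (op c)) (F.obj c ⊗ D.obj (op c))).inv) ≫ (ι c ⊗ₘ ι c))
    (hcε : ∀ c : C, ι c ≫ ε = (p c).evaluation')
    (ρc : ∀ c : C, F.obj c ⟶ T ⊗ F.obj c)
    (hρ : ∀ c : C, ρc c =
      (ρ_ (F.obj c)).inv ≫ (F.obj c ◁ (p c).coevaluation') ≫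
        (α_ (F.obj c) (D.obj (op c)) (F.obj c)).inv ≫ (ι c ▷ F.obj c)) :
    (∀ c : C, ρc c ≫ (ε ▷ F.obj c) = (λ_ (F.obj c)).inv) ∧
    (∀ c : C, ρc c ≫ (Δ ▷ F.obj c) ≫ (α_ T T (F.obj c)).hom =
      ρc c ≫ (T ◁ ρc c)) ∧
    (∀ {c c' : C} (f : c ⟶ c'),
      F.map f ≫ ρc c' = ρc c ≫ (T ◁ F.map f)) := by
  refine ⟨?_, ?_, ?_⟩
  · intro c
    rw [hρ c]
    simp only [Category.assoc]
    rw [← MonoidalCategory.comp_whiskerRight, hcε c,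
      ExactPairing.coevaluation_evaluation']
    simp
  · intro c
    rw [hρ c]
    simp only [Category.assoc]
    rw [← MonoidalCategory.comp_whiskerRight_assoc, hΔ c]
    ext v
    simp only [ModuleCat.hom_comp, LinearMap.coe_comp, Function.comp_apply]
    exact (lemA (F.obj c) (D.obj (op c)) T (p c).coevaluation' (p c).coevaluation'
        (ι c) v).trans
      (lemB (F.obj c) (D.obj (op c)) T (p c).coevaluation' (p c).coevaluation'
        (ι c) v).symm
  · intro c c' f
    rw [hρ c, hρ c']
    rw [MonoidalCategory.rightUnitor_inv_naturality_assoc (F.map f),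
      ← MonoidalCategory.whisker_exchange_assoc,
      MonoidalCategory.associator_inv_naturality_left_assoc,
      ← MonoidalCategory.comp_whiskerRight, hdin f,
      MonoidalCategory.comp_whiskerRight,
      ← MonoidalCategory.associator_inv_naturality_middle_assoc,
      ← MonoidalCategory.whiskerLeft_comp_assoc, hη f,
      MonoidalCategory.whiskerLeft_comp_assoc,
      MonoidalCategory.associator_inv_naturality_right_assoc,
      MonoidalCategory.whisker_exchange]
    simp only [Category.assoc]
end

section
/- Let K be a field, C a K-coalgebra, and M a C-comodule with coaction Δ_M : M → C ⊗ M. Then every element v ∈ M is contained in a finite-dimensional subcomodule of M: if Δ_M(v) = Σ_{j=1}^n a_j ⊗ v_j with the a_j part of a basis of C, then the subspace spanned by v and the v_j is a subcomodule containing v. -/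
open TensorProduct

noncomputable section AuxStmt18

variable {K : Type*} [Field K] {C : Type*} [AddCommGroup C] [Module K C]
  {M : Type*} [AddCommGroup M] [Module K M] {ι : Type*} [DecidableEq ι] (b : Module.Basis ι K C)

/-- Coefficient equivalence coming from a basis of `C`. -/
def stmt18CoeffEquiv : C ⊗[K] M ≃ₗ[K] (ι →₀ M) :=
  (TensorProduct.congr b.repr (LinearEquiv.refl K M)).trans
    (TensorProduct.finsuppScalarLeft K M ι)

lemma stmt18CoeffEquiv_symm_single (i : ι) (m : M) :
    (stmt18CoeffEquiv (M := M) b).symm (Finsupp.single i m) = b i ⊗ₜ[K] m := by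
  classical
  simp [stmt18CoeffEquiv, TensorProduct.finsuppScalarLeft_symm_apply_single]

lemma stmt18_eq_sum (z : C ⊗[K] M) :
    z = ∑ i ∈ (stmt18CoeffEquiv (M := M) b z).support,
      b i ⊗ₜ[K] stmt18CoeffEquiv (M := M) b z i := by
  classical
  conv_lhs => rw [← (stmt18CoeffEquiv (M := M) b).symm_apply_apply z,
    ← Finsupp.sum_single (stmt18CoeffEquiv (M := M) b z)]
  rw [map_finsuppSum]
  simp [Finsupp.sum, stmt18CoeffEquiv_symm_single]

end AuxStmt18

/-- Let `K` be a field, `C` a `K`-coalgebra, and `M` a `C`-comodule with coaction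
`ρ : M →ₗ[K] C ⊗[K] M` (coassociative and counital).  Then every element `v ∈ M` is
contained in a finite-dimensional subcomodule of `M`: a finite-dimensional subspace `N`
with `v ∈ N` and `ρ(N) ⊆ C ⊗ N`. -/
theorem stmt18 {K : Type*} [Field K]
    {C : Type*} [AddCommGroup C] [Module K C] [Coalgebra K C]
    {M : Type*} [AddCommGroup M] [Module K M]
    (ρ : M →ₗ[K] C ⊗[K] M)
    (hcoassoc : ∀ m : M,
      (LinearMap.rTensor M (Coalgebra.comul (R := K) (A := C))) (ρ m) =
        (TensorProduct.assoc K C C M).symm ((LinearMap.lTensor C ρ) (ρ m)))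
    (hcounit : ∀ m : M,
      (TensorProduct.lid K M)
        ((LinearMap.rTensor M (Coalgebra.counit (R := K) (A := C))) (ρ m)) = m)
    (v : M) :
    ∃ N : Submodule K M, v ∈ N ∧ FiniteDimensional K N ∧
      ∀ n ∈ N, ρ n ∈ LinearMap.range (LinearMap.lTensor C N.subtype) := by
  classical
  set b := Module.Basis.ofVectorSpace K C with hb
  set x := ρ v with hx
  set w : _ →₀ M := stmt18CoeffEquiv (M := M) b x with hw
  set N : Submodule K M := Submodule.span K ((w.support.image w : Finset M) : Set M) with hN
  have hwN : ∀ i ∈ w.support, w i ∈ N := fun i hi =>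
    Submodule.subset_span (Finset.mem_image_of_mem w hi)
  have hxsum : x = ∑ i ∈ w.support, b i ⊗ₜ[K] w i := stmt18_eq_sum b x
  refine ⟨N, ?_, ?_, ?_⟩
  · -- v ∈ N, via counitality
    have hv := hcounit v
    rw [← hx] at hv
    rw [← hv, hxsum, map_sum, map_sum]
    refine Submodule.sum_mem N fun i hi => ?_
    rw [LinearMap.rTensor_tmul]
    simp only [TensorProduct.lid_tmul]
    exact N.smul_mem _ (hwN i hi)
  · exact FiniteDimensional.span_of_finite K (Finset.finite_toSet _)
  · -- stability
    have key : ∀ j ∈ w.support,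
        ρ (w j) ∈ LinearMap.range (LinearMap.lTensor C N.subtype) := by
      intro j hj
      set Hj : C ⊗[K] C →ₗ[K] C :=
        (TensorProduct.lid K C).toLinearMap ∘ₗ LinearMap.rTensor C (b.coord j) with hHj
      set Fj : C ⊗[K] (C ⊗[K] M) →ₗ[K] C ⊗[K] M :=
        (TensorProduct.lid K (C ⊗[K] M)).toLinearMap ∘ₗ
          LinearMap.rTensor (C ⊗[K] M) (b.coord j) with hFj
      have hFG : Fj ∘ₗ (TensorProduct.assoc K C C M).toLinearMap
          = LinearMap.rTensor M Hj := by
        apply TensorProduct.ext_threefold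
        intro a c m
        simp [hFj, hHj, TensorProduct.smul_tmul']
      have h1 : Fj (LinearMap.lTensor C ρ x) = ρ (w j) := by
        rw [hxsum, map_sum, map_sum]
        have hterm : ∀ i ∈ w.support,
            Fj (LinearMap.lTensor C ρ (b i ⊗ₜ[K] w i))
              = if i = j then ρ (w i) else 0 := by
          intro i _
          rw [LinearMap.lTensor_tmul]
          simp [hFj, Module.Basis.coord_apply, Finsupp.single_apply, ite_smul]
        rw [Finset.sum_congr rfl hterm, Finset.sum_ite_eq' w.support j (fun i => ρ (w i))]
        simp [hj]
      have h2 : Fj (LinearMap.lTensor C ρ x)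
          = LinearMap.rTensor M Hj
              (LinearMap.rTensor M (Coalgebra.comul (R := K) (A := C)) x) := by
        have hca := hcoassoc v
        rw [← hx] at hca
        have hca' : (TensorProduct.assoc K C C M)
            ((LinearMap.rTensor M (Coalgebra.comul (R := K) (A := C))) x)
              = LinearMap.lTensor C ρ x := by
          rw [hca, LinearEquiv.apply_symm_apply]
        calc Fj (LinearMap.lTensor C ρ x)
            = Fj ((TensorProduct.assoc K C C M)
                ((LinearMap.rTensor M (Coalgebra.comul (R := K) (A := C))) x)) := by
              rw [hca']
          _ = (Fj ∘ₗ (TensorProduct.assoc K C C M).toLinearMap)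
                ((LinearMap.rTensor M (Coalgebra.comul (R := K) (A := C))) x) := rfl
          _ = LinearMap.rTensor M Hj
                ((LinearMap.rTensor M (Coalgebra.comul (R := K) (A := C))) x) := by
              rw [hFG]
      rw [← h1, h2, hxsum, map_sum, map_sum]
      refine Submodule.sum_mem _ fun i hi => ?_
      rw [LinearMap.rTensor_tmul, LinearMap.rTensor_tmul]
      exact ⟨Hj (Coalgebra.comul (b i)) ⊗ₜ[K] (⟨w i, hwN i hi⟩ : N), by
        simp [LinearMap.lTensor_tmul]⟩
    have hle : N ≤ Submodule.comap ρ (LinearMap.range (LinearMap.lTensor C N.subtype)) := by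
      rw [hN]
      apply Submodule.span_le.mpr
      rintro m hm
      simp only [Finset.coe_image, Set.mem_image, Finset.mem_coe] at hm
      obtain ⟨j, hj, rfl⟩ := hm
      exact key j hj
    intro n hn
    exact hle hn
end
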